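/- Let D ⊂ C(K) be a nonempty compact set of continuous functions on a compact set K, ν a probability measure on K, and (η_i) i.i.d. with law ν. Let f⋆ minimize f ↦ ∫ f dν over D and, for each M, let f⋆_M minimize f ↦ (1/M) Σ_{i=1}^M f(η_i) over D. Then ∫ f⋆_M dν → ∫ f⋆ dν almost surely as M → ∞. -/

import Mathlib

open MeasureTheory ProbabilityTheory Filter

/-- Consistency of empirical minimizers over a compact function class:
the expected value of the empirical minimizer converges a.s. to the optimal value. -/
theorem stmt_2 {K : Type*} [MetricSpace K] [CompactSpace K]
    [MeasurableSpace K] [BorelSpace K]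
    (D : Set C(K, ℝ)) (hDne : D.Nonempty) (hD : IsCompact D)
    (ν : Measure K) [IsProbabilityMeasure ν]
    {Ω : Type*} [MeasurableSpace Ω] (P : Measure Ω) [IsProbabilityMeasure P]
    (η : ℕ → Ω → K) (hmeas : ∀ i, Measurable (η i))
    (hindep : iIndepFun η P)
    (hlaw : ∀ i, Measure.map (η i) P = ν)
    (fstar : C(K, ℝ)) (hfstar : fstar ∈ D)
    (hfstar_min : ∀ f ∈ D, ∫ x, fstar x ∂ν ≤ ∫ x, f x ∂ν)
    (fM : ℕ → Ω → C(K, ℝ))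
    (hfM : ∀ M ω, fM M ω ∈ D)
    (hfM_min : ∀ (M : ℕ) (ω : Ω), ∀ f ∈ D,
      (M : ℝ)⁻¹ * ∑ i ∈ Finset.range M, (fM M ω) (η i ω)
        ≤ (M : ℝ)⁻¹ * ∑ i ∈ Finset.range M, f (η i ω)) :
    ∀ᵐ ω ∂P, Tendsto (fun M : ℕ => ∫ x, (fM M ω) x ∂ν) atTop
      (nhds (∫ x, fstar x ∂ν)) := by
  -- integrability of continuous maps w.r.t. ν
  have integν : ∀ f : C(K, ℝ), Integrable (fun x => f x) ν := fun f =>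
    Integrable.mono' (integrable_const ‖f‖)
      f.continuous.measurable.aestronglyMeasurable
      (Eventually.of_forall fun x => f.norm_coe_le_norm x)
  -- |∫ f - ∫ g| ≤ dist f g
  have intdiff : ∀ f g : C(K, ℝ), |(∫ x, f x ∂ν) - ∫ x, g x ∂ν| ≤ dist f g := by
    intro f g
    rw [← integral_sub (integν f) (integν g)]
    calc |∫ x, f x - g x ∂ν| ≤ ∫ x, |f x - g x| ∂ν :=
          by simpa [Real.norm_eq_abs] using norm_integral_le_integral_norm (fun x => f x - g x)
      _ ≤ ∫ _x, dist f g ∂ν := by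
          refine integral_mono ((integν f).sub (integν g)).abs (integrable_const _) ?_
          intro x
          simpa [Real.dist_eq] using f.dist_apply_le_dist (g := g) x
      _ = dist f g := by simp
  -- empirical means are close for close functions
  have empdiff : ∀ (M : ℕ) (ω : Ω) (f g : C(K, ℝ)),
      |(M : ℝ)⁻¹ * ∑ i ∈ Finset.range M, f (η i ω)
        - (M : ℝ)⁻¹ * ∑ i ∈ Finset.range M, g (η i ω)| ≤ dist f g := by
    intro M ω f g
    rcases Nat.eq_zero_or_pos M with h | h
    · simp [h, dist_nonneg]
    · rw [← mul_sub, ← Finset.sum_sub_distrib, abs_mul,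
        abs_of_nonneg (by positivity : (0:ℝ) ≤ (M:ℝ)⁻¹)]
      have h1 : |∑ i ∈ Finset.range M, (f (η i ω) - g (η i ω))|
          ≤ (M : ℝ) * dist f g := by
        calc |∑ i ∈ Finset.range M, (f (η i ω) - g (η i ω))|
            ≤ ∑ i ∈ Finset.range M, |f (η i ω) - g (η i ω)| :=
              Finset.abs_sum_le_sum_abs _ _
          _ ≤ ∑ _i ∈ Finset.range M, dist f g := by
              refine Finset.sum_le_sum fun i _ => ?_
              simpa [Real.dist_eq] using f.dist_apply_le_dist (g := g) (η i ω)
          _ = (M : ℝ) * dist f g := by simp [mul_comm]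
      calc (M : ℝ)⁻¹ * |∑ i ∈ Finset.range M, (f (η i ω) - g (η i ω))|
          ≤ (M : ℝ)⁻¹ * ((M : ℝ) * dist f g) := by
            exact mul_le_mul_of_nonneg_left h1 (by positivity)
        _ = dist f g := by
            field_simp
  -- strong law of large numbers for a fixed continuous function
  have slln : ∀ f : C(K, ℝ), ∀ᵐ ω ∂P,
      Tendsto (fun M : ℕ => (M : ℝ)⁻¹ * ∑ i ∈ Finset.range M, f (η i ω)) atTop
        (nhds (∫ x, f x ∂ν)) := by
    intro f
    have hX : ∀ i, Measurable fun ω => f (η i ω) := fun i =>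
      f.continuous.measurable.comp (hmeas i)
    have hint : Integrable (fun ω => f (η 0 ω)) P :=
      Integrable.mono' (integrable_const ‖f‖) (hX 0).aestronglyMeasurable
        (Eventually.of_forall fun ω => f.norm_coe_le_norm _)
    have hid : ∀ i, IdentDistrib (fun ω => f (η i ω)) (fun ω => f (η 0 ω)) P P := by
      intro i
      refine ⟨(hX i).aemeasurable, (hX 0).aemeasurable, ?_⟩
      have h1 : (fun ω => f (η i ω)) = (fun x => f x) ∘ η i := rfl
      have h2 : (fun ω => f (η 0 ω)) = (fun x => f x) ∘ η 0 := rfl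
      rw [h1, h2, ← Measure.map_map f.continuous.measurable (hmeas i),
        ← Measure.map_map f.continuous.measurable (hmeas 0), hlaw i, hlaw 0]
    have hpind : Pairwise (Function.onFun (IndepFun · · P) fun i ω => f (η i ω)) := by
      intro i j hij
      exact (hindep.indepFun hij).comp f.continuous.measurable f.continuous.measurable
    have hexp : ∫ ω, f (η 0 ω) ∂P = ∫ x, f x ∂ν := by
      rw [← hlaw 0, integral_map (hmeas 0).aemeasurable
        f.continuous.measurable.aestronglyMeasurable]
    have := strong_law_ae_real (μ := P) (fun i ω => f (η i ω)) hint hpind hid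
    filter_upwards [this] with ω hω
    rw [hexp] at hω
    simpa [div_eq_inv_mul] using hω
  -- countable dense subset of D
  obtain ⟨c, hc_count, hc_dense⟩ := hD.isSeparable
  have hAE : ∀ᵐ ω ∂P, ∀ g ∈ c,
      Tendsto (fun M : ℕ => (M : ℝ)⁻¹ * ∑ i ∈ Finset.range M, g (η i ω)) atTop
        (nhds (∫ x, g x ∂ν)) :=
    (ae_ball_iff hc_count).2 fun g _ => slln g
  filter_upwards [hAE] with ω hω
  rw [Metric.tendsto_atTop]
  intro ε hε
  have hε8 : 0 < ε / 8 := by positivity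
  -- finite subcover of D by ε/8-balls centered in c
  have hcover : D ⊆ ⋃ g : c, Metric.ball (g : C(K, ℝ)) (ε / 8) := by
    intro f hf
    obtain ⟨g, hg, hdg⟩ := Metric.mem_closure_iff.1 (hc_dense hf) (ε / 8) hε8
    exact Set.mem_iUnion.2 ⟨⟨g, hg⟩, Metric.mem_ball.2 hdg⟩
  obtain ⟨t, ht⟩ := hD.elim_finite_subcover (fun g : c => Metric.ball (g : C(K, ℝ)) (ε / 8))
    (fun g => Metric.isOpen_ball) hcover
  -- eventually all empirical means of the net are close to their integrals
  have hev : ∀ᶠ M : ℕ in atTop, ∀ g ∈ t,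
      |(M : ℝ)⁻¹ * ∑ i ∈ Finset.range M, (g : C(K, ℝ)) (η i ω)
        - ∫ x, (g : C(K, ℝ)) x ∂ν| < ε / 8 := by
    rw [eventually_all_finset]
    intro g _
    have := (hω g g.2).eventually (Metric.ball_mem_nhds _ hε8)
    filter_upwards [this] with M hM
    simpa [Real.dist_eq] using hM
  obtain ⟨N, hN⟩ := eventually_atTop.1 hev
  refine ⟨N, fun M hM => ?_⟩
  -- uniform error bound over D at time M
  have hunif : ∀ f ∈ D,
      |(M : ℝ)⁻¹ * ∑ i ∈ Finset.range M, f (η i ω) - ∫ x, f x ∂ν| ≤ 3 * (ε / 8) := by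
    intro f hf
    obtain ⟨g, hgt, hfg⟩ := Set.mem_iUnion₂.1 (ht hf)
    have hd : dist f (g : C(K, ℝ)) < ε / 8 := Metric.mem_ball.1 hfg
    have h1 := empdiff M ω f g
    have h2 := hN M hM g hgt
    have h3 := intdiff (g : C(K, ℝ)) f
    have : |(M : ℝ)⁻¹ * ∑ i ∈ Finset.range M, f (η i ω) - ∫ x, f x ∂ν|
        ≤ |(M : ℝ)⁻¹ * ∑ i ∈ Finset.range M, f (η i ω)
            - (M : ℝ)⁻¹ * ∑ i ∈ Finset.range M, (g : C(K, ℝ)) (η i ω)|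
          + |(M : ℝ)⁻¹ * ∑ i ∈ Finset.range M, (g : C(K, ℝ)) (η i ω)
              - ∫ x, (g : C(K, ℝ)) x ∂ν|
          + |(∫ x, (g : C(K, ℝ)) x ∂ν) - ∫ x, f x ∂ν| := by
      have := abs_sub_le ((M : ℝ)⁻¹ * ∑ i ∈ Finset.range M, f (η i ω))
        ((M : ℝ)⁻¹ * ∑ i ∈ Finset.range M, (g : C(K, ℝ)) (η i ω)) (∫ x, f x ∂ν)
      have h4 := abs_sub_le ((M : ℝ)⁻¹ * ∑ i ∈ Finset.range M, (g : C(K, ℝ)) (η i ω))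
        (∫ x, (g : C(K, ℝ)) x ∂ν) (∫ x, f x ∂ν)
      linarith
    have hd' : dist (g : C(K, ℝ)) f < ε / 8 := by rwa [dist_comm]
    linarith
  -- sandwich argument
  have hmem := hfM M ω
  have hA : ∫ x, fstar x ∂ν ≤ ∫ x, (fM M ω) x ∂ν := hfstar_min _ hmem
  have hB : ∫ x, (fM M ω) x ∂ν
      ≤ (M : ℝ)⁻¹ * ∑ i ∈ Finset.range M, (fM M ω) (η i ω) + 3 * (ε / 8) := by
    have := hunif (fM M ω) hmem
    have := abs_le.1 this
    linarith [this.2]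
  have hC : (M : ℝ)⁻¹ * ∑ i ∈ Finset.range M, (fM M ω) (η i ω)
      ≤ (M : ℝ)⁻¹ * ∑ i ∈ Finset.range M, fstar (η i ω) := hfM_min M ω fstar hfstar
  have hE : (M : ℝ)⁻¹ * ∑ i ∈ Finset.range M, fstar (η i ω)
      ≤ ∫ x, fstar x ∂ν + 3 * (ε / 8) := by
    have := abs_le.1 (hunif fstar hfstar)
    linarith [this.2]
  rw [Real.dist_eq, abs_of_nonneg (by linarith)]
  linarith
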